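/- Let α_n be the effective resistance across the first rung of the ladder graph P_2 □ P_n. For 1 < k < n and i ∈ {1,2}, the effective resistance across the (i,k)-th rail of P_2 □ P_n (i.e., between (i,k) and (i,k+1)) equals 1 / (1 + 1/(α_k + α_{n−k} + 1)). -/

import Mathlib

open Classical Matrix

/-- The four Penrose conditions characterizing the Moore–Penrose pseudoinverse
of a real square matrix. -/
def IsMoorePenroseInverse {V : Type*} [Fintype V] [DecidableEq V]
    (L P : Matrix V V ℝ) : Prop :=
  L * P * L = L ∧ P * L * P = P ∧ (L * P)ᵀ = L * P ∧ (P * L)ᵀ = P * L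

/-- The Moore–Penrose pseudoinverse of a real square matrix. -/
noncomputable def pinv {V : Type*} [Fintype V] [DecidableEq V]
    (L : Matrix V V ℝ) : Matrix V V ℝ :=
  if h : ∃ P, IsMoorePenroseInverse L P then h.choose else 0

/-- Effective resistance between `x` and `y` computed from a (weighted) Laplacian `L`. -/
noncomputable def effResM {V : Type*} [Fintype V] [DecidableEq V]
    (L : Matrix V V ℝ) (x y : V) : ℝ :=
  pinv L x x + pinv L y y - 2 * pinv L x y

/-- Effective resistance between vertices `x` and `y` of a simple graph `G`. -/
noncomputable def effRes {V : Type*} [Fintype V] [DecidableEq V]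
    (G : SimpleGraph V) (x y : V) : ℝ :=
  effResM (G.lapMatrix ℝ) x y

/-- The node resistance curvature `p_x = 1 - (1/2) ∑_{y ~ x} ω_{x,y}`. -/
noncomputable def curv {V : Type*} [Fintype V] [DecidableEq V]
    (G : SimpleGraph V) (x : V) : ℝ :=
  1 - (1/2) * ∑ y : V, if G.Adj x y then effRes G x y else 0

/-- The grid graph `P_m □ P_n` (vertex `(i,j)` of the paper corresponds to
`(⟨i-1⟩, ⟨j-1⟩) : Fin m × Fin n`). -/
def grid (m n : ℕ) : SimpleGraph (Fin m × Fin n) :=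
  (SimpleGraph.pathGraph m).boxProd (SimpleGraph.pathGraph n)

/-- The ladder graph `P_2 □ P_n` (vertex `(i,k)` of the paper corresponds to
`(⟨i-1⟩, ⟨k-1⟩) : Fin 2 × Fin n`). -/
def ladder (n : ℕ) : SimpleGraph (Fin 2 × Fin n) :=
  (SimpleGraph.pathGraph 2).boxProd (SimpleGraph.pathGraph n)

/-- `α_n`, the effective resistance across the first rung of the ladder `P_2 □ P_n`,
i.e. between the vertices `(1,1)` and `(2,1)` of the paper (junk value `0` for `n = 0`). -/
noncomputable def alpha (n : ℕ) : ℝ :=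
  if h : 0 < n then effRes (ladder n) (0, ⟨0, h⟩) (1, ⟨0, h⟩) else 0

section MP
variable {V : Type*} [Fintype V] [DecidableEq V]

lemma isMP_unique {L P Q : Matrix V V ℝ} (hP : IsMoorePenroseInverse L P)
    (hQ : IsMoorePenroseInverse L Q) : P = Q := by
  obtain ⟨hP1, hP2, hP3, hP4⟩ := hP
  obtain ⟨hQ1, hQ2, hQ3, hQ4⟩ := hQ
  have h1 : L * P = L * Q := by
    calc L * P = (L * P)ᵀ := hP3.symm
      _ = ((L * Q * L) * P)ᵀ := by rw [hQ1]
      _ = ((L * Q) * (L * P))ᵀ := by simp only [mul_assoc]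
      _ = (L * P)ᵀ * (L * Q)ᵀ := by rw [transpose_mul]
      _ = (L * P) * (L * Q) := by rw [hP3, hQ3]
      _ = (L * P * L) * Q := by simp only [mul_assoc]
      _ = L * Q := by rw [hP1]
  have h2 : P * L = Q * L := by
    calc P * L = (P * L)ᵀ := hP4.symm
      _ = (P * (L * Q * L))ᵀ := by rw [hQ1]
      _ = ((P * L) * (Q * L))ᵀ := by simp only [mul_assoc]
      _ = (Q * L)ᵀ * (P * L)ᵀ := by rw [transpose_mul]
      _ = (Q * L) * (P * L) := by rw [hP4, hQ4]
      _ = Q * (L * P * L) := by simp only [mul_assoc]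
      _ = Q * L := by rw [hP1]
  calc P = P * L * P := hP2.symm
    _ = Q * L * P := by rw [h2]
    _ = Q * (L * P) := by rw [mul_assoc]
    _ = Q * (L * Q) := by rw [h1]
    _ = Q := by rw [← mul_assoc, hQ2]

lemma exists_MP {L : Matrix V V ℝ} (hL : L.IsHermitian) :
    ∃ P, IsMoorePenroseInverse L P := by
  set U : Matrix V V ℝ := (hL.eigenvectorUnitary : Matrix V V ℝ) with hU
  set d : V → ℝ := hL.eigenvalues with hd
  set D : Matrix V V ℝ := diagonal d with hD
  set D' : Matrix V V ℝ := diagonal (fun i => (d i)⁻¹) with hD'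
  have hUU : star U * U = 1 := UnitaryGroup.star_mul_self hL.eigenvectorUnitary
  have hL' : L = U * D * star U := by
    have := hL.spectral_theorem
    rwa [RCLike.ofReal_real_eq_id, Function.id_comp] at this
  have hDD' : D * D' * D = D := by
    rw [hD, hD', diagonal_mul_diagonal, diagonal_mul_diagonal]
    have : (fun i => d i * (d i)⁻¹ * d i) = d := by
      funext i
      rcases eq_or_ne (d i) 0 with h | h
      · simp [h]
      · field_simp
    rw [this]
  have hD'D : D' * D * D' = D' := by
    rw [hD, hD', diagonal_mul_diagonal, diagonal_mul_diagonal]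
    have : (fun i => (d i)⁻¹ * d i * (d i)⁻¹) = fun i => (d i)⁻¹ := by
      funext i
      rcases eq_or_ne (d i) 0 with h | h
      · simp [h]
      · field_simp
    rw [this]
  have key : ∀ E F : Matrix V V ℝ,
      (U * E * star U) * (U * F * star U) = U * (E * F) * star U := by
    intro E F
    calc (U * E * star U) * (U * F * star U) = U * E * (star U * U) * F * star U := by
          simp only [mul_assoc]
      _ = U * (E * F) * star U := by rw [hUU]; simp only [mul_assoc, mul_one, one_mul]
  have hsymm : ∀ g : V → ℝ, (U * diagonal g * star U)ᵀ = U * diagonal g * star U := by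
    intro g
    rw [← conjTranspose_eq_transpose_of_trivial, star_eq_conjTranspose,
      conjTranspose_mul, conjTranspose_mul, conjTranspose_conjTranspose,
      diagonal_conjTranspose]
    have hg : star g = g := funext fun i => star_trivial _
    rw [hg, mul_assoc]
  refine ⟨U * D' * star U, ?_, ?_, ?_, ?_⟩
  · rw [hL', key, key, hDD']
  · rw [hL', key, key, hD'D]
  · rw [hL', key, hD, hD', diagonal_mul_diagonal]; exact hsymm _
  · rw [hL', key, hD, hD', diagonal_mul_diagonal]; exact hsymm _

end MP
section Potential
variable {V : Type*} [Fintype V] [DecidableEq V]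

lemma pinv_spec {L : Matrix V V ℝ} (hL : L.IsHermitian) :
    IsMoorePenroseInverse L (pinv L) := by
  have h : ∃ P, IsMoorePenroseInverse L P := exists_MP hL
  rw [pinv, dif_pos h]
  exact h.choose_spec

lemma pinv_symm {L : Matrix V V ℝ} (hL : L.IsHermitian) :
    (pinv L)ᵀ = pinv L := by
  have hLT : Lᵀ = L := by
    rw [← conjTranspose_eq_transpose_of_trivial]; exact hL
  obtain ⟨h1, h2, h3, h4⟩ := pinv_spec hL
  set P := pinv L with hPdef
  have e34 : L * Pᵀ = P * L := by
    calc L * Pᵀ = Lᵀ * Pᵀ := by rw [hLT]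
      _ = (P * L)ᵀ := by rw [transpose_mul]
      _ = P * L := h4
  have e43 : Pᵀ * L = L * P := by
    calc Pᵀ * L = Pᵀ * Lᵀ := by rw [hLT]
      _ = (L * P)ᵀ := by rw [transpose_mul]
      _ = L * P := h3
  have e1 : L * Pᵀ * L = L := by
    have h := congrArg transpose h1
    rw [transpose_mul, transpose_mul, hLT, ← mul_assoc] at h
    exact h
  have e2 : Pᵀ * L * Pᵀ = Pᵀ := by
    have h := congrArg transpose h2
    rw [transpose_mul, transpose_mul, hLT, ← mul_assoc] at h
    exact h
  have e3 : (L * Pᵀ)ᵀ = L * Pᵀ := by rw [e34, h4]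
  have e4 : (Pᵀ * L)ᵀ = Pᵀ * L := by rw [e43, h3]
  have hPt : IsMoorePenroseInverse L Pᵀ := ⟨e1, e2, e3, e4⟩
  exact isMP_unique hPt ⟨h1, h2, h3, h4⟩

/-- The key tool: if `L f = e_x - e_y`, then the effective resistance computed from the
pseudoinverse of the symmetric matrix `L` equals `f x - f y`. -/
lemma effResM_eq_of_mulVec {L : Matrix V V ℝ} (hL : L.IsHermitian) (x y : V) (f : V → ℝ)
    (hf : L *ᵥ f = fun z => (if z = x then (1:ℝ) else 0) - (if z = y then 1 else 0)) :
    effResM L x y = f x - f y := by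
  have hLT : Lᵀ = L := by
    rw [← conjTranspose_eq_transpose_of_trivial]; exact hL
  obtain ⟨h1, h2, h3, h4⟩ := pinv_spec hL
  have hsym := pinv_symm hL
  set P := pinv L with hPdef
  set δ : V → ℝ := fun z => (if z = x then (1:ℝ) else 0) - (if z = y then 1 else 0) with hδ
  have hδ' : δ = (Pi.single x 1 : V → ℝ) - Pi.single y 1 := by
    funext z
    simp [hδ, Pi.single_apply, eq_comm]
  have claim1 : δ ⬝ᵥ (P *ᵥ δ) = P x x + P y y - 2 * P x y := by
    have hxy : P x y = P y x := by
      have := congrFun (congrFun hsym y) x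
      simpa [transpose_apply] using this
    rw [hδ']
    simp only [mulVec_sub, mulVec_single, sub_dotProduct, dotProduct_sub,
      single_dotProduct, Pi.sub_apply, mul_one, one_mul]
    ring_nf
    rw [hxy]
    simp only [Pi.smul_apply, MulOpposite.smul_eq_mul_unop, MulOpposite.unop_op, mul_one, col_apply, hxy]
    ring
  have claim2 : δ ⬝ᵥ (P *ᵥ δ) = f x - f y := by
    have hLf : L *ᵥ f = f ᵥ* L := by
      rw [← mulVec_transpose, hLT]
    conv_lhs => rw [← hf]
    rw [mulVec_mulVec, hLf, dotProduct_mulVec, vecMul_vecMul, ← mul_assoc, h1, ← hLf, hf]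
    simp [hδ, dotProduct, sub_mul, ite_mul, Finset.sum_sub_distrib]
  rw [effResM, ← hPdef, ← claim1, claim2]

lemma effRes_eq_of_mulVec (G : SimpleGraph V) (x y : V) (f : V → ℝ)
    (hf : G.lapMatrix ℝ *ᵥ f = fun z => (if z = x then (1:ℝ) else 0) - (if z = y then 1 else 0)) :
    effRes G x y = f x - f y := by
  have hherm : (G.lapMatrix ℝ).IsHermitian := (SimpleGraph.posSemidef_lapMatrix ℝ G).1
  exact effResM_eq_of_mulVec hherm x y f hf

end Potential
section Alg

noncomputable def tt : ℝ := 2 + Real.sqrt 3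
noncomputable def ss : ℝ := 2 - Real.sqrt 3

lemma sqrt3_sq : Real.sqrt 3 * Real.sqrt 3 = 3 := Real.mul_self_sqrt (by norm_num)
lemma sqrt3_lt_two : Real.sqrt 3 < 2 := by
  nlinarith [sqrt3_sq, Real.sqrt_nonneg 3]
lemma sqrt3_gt_one : 1 < Real.sqrt 3 := by
  nlinarith [sqrt3_sq, Real.sqrt_nonneg 3]

lemma tt_pos : 0 < tt := by unfold tt; nlinarith [Real.sqrt_nonneg 3]
lemma ss_pos : 0 < ss := by unfold ss; linarith [sqrt3_lt_two]
lemma tt_ne : tt ≠ 0 := ne_of_gt tt_pos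
lemma ss_ne : ss ≠ 0 := ne_of_gt ss_pos
lemma tt_mul_ss : tt * ss = 1 := by unfold tt ss; nlinarith [sqrt3_sq]
lemma tt_add_ss : tt + ss = 4 := by unfold tt ss; ring
lemma tt_inv : tt⁻¹ = ss := by
  field_simp [tt_ne]
  linarith [tt_mul_ss]
lemma ss_inv : ss⁻¹ = tt := by
  field_simp [ss_ne]
  nlinarith [tt_mul_ss]

noncomputable def w (d : ℤ) : ℝ := tt ^ d + ss ^ (d + 1)

lemma w_pos (d : ℤ) : 0 < w d :=
  add_pos (zpow_pos tt_pos d) (zpow_pos ss_pos (d+1))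

lemma w_rec (d : ℤ) : w (d + 1) + w (d - 1) = 4 * w d := by
  unfold w
  have h1 : tt ^ (d + 1) = tt ^ d * tt := zpow_add_one₀ tt_ne d
  have h2 : tt ^ (d - 1) = tt ^ d * tt⁻¹ := zpow_sub_one₀ tt_ne d
  have h3 : ss ^ (d + 1 + 1) = ss ^ (d + 1) * ss := zpow_add_one₀ ss_ne (d+1)
  have h4 : ss ^ (d - 1 + 1) = ss ^ (d + 1) * ss⁻¹ := by
    rw [sub_add_cancel, zpow_add_one₀ ss_ne d, mul_assoc, mul_inv_cancel₀ ss_ne, mul_one]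
  rw [h1, h2, h3, h4, tt_inv, ss_inv]
  linear_combination (tt ^ d + ss ^ (d + 1)) * tt_add_ss

lemma w_neg_one : w (-1) = w 0 := by
  unfold w
  norm_num
  rw [tt_inv]
  ring

lemma three_w0 : 3 * w 0 = w 1 := by
  unfold w
  norm_num
  rw [sq]
  unfold tt ss
  linear_combination -sqrt3_sq

noncomputable def Qq (d : ℤ) : ℝ := 3 * w d - w (d - 1)

lemma Qq_zero : Qq 0 = 2 * w 0 := by
  unfold Qq
  rw [show (0:ℤ) - 1 = -1 from rfl, w_neg_one]
  ring

lemma Qq_succ (d : ℤ) : Qq (d + 1) = 3 * Qq d + 2 * w d := by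
  unfold Qq
  have h := w_rec d
  have e1 : (d + 1 : ℤ) - 1 = d := by ring
  rw [e1]
  have e2 : w (d+1) = 4 * w d - w (d - 1) := by linarith
  rw [e2]
  ring

lemma Qq_pos (m : ℕ) : 0 < Qq m := by
  induction m with
  | zero => rw [show ((0:ℕ):ℤ) = 0 from rfl, Qq_zero]; linarith [w_pos 0]
  | succ p ih =>
      have : ((p+1 : ℕ) : ℤ) = (p:ℤ) + 1 := by push_cast; ring
      rw [this, Qq_succ]
      have := w_pos (p:ℤ)
      linarith

lemma Qq_ne (m : ℕ) : Qq m ≠ 0 := ne_of_gt (Qq_pos m)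

end Alg
section GraphSums

open SimpleGraph Finset

lemma lap_mulVec_sum {V : Type*} [Fintype V] [DecidableEq V] (G : SimpleGraph V)
    (f : V → ℝ) (x : V) :
    (G.lapMatrix ℝ *ᵥ f) x = ∑ u : V, if G.Adj x u then f x - f u else 0 := by
  rw [SimpleGraph.lapMatrix_mulVec_apply]
  have h1 : (G.degree x : ℝ) * f x = ∑ u ∈ G.neighborFinset x, f x := by
    rw [Finset.sum_const, SimpleGraph.degree, nsmul_eq_mul]
  rw [h1, ← Finset.sum_sub_distrib]
  rw [show G.neighborFinset x = Finset.univ.filter (G.Adj x) from by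
    ext u; simp [SimpleGraph.mem_neighborFinset]]
  rw [Finset.sum_filter]

lemma fin_sum_eq {n : ℕ} (m : ℕ) (g : Fin n → ℝ) :
    (∑ b : Fin n, if (b : ℕ) = m then g b else 0)
      = if h : m < n then g ⟨m, h⟩ else 0 := by
  split
  · next h =>
      rw [Finset.sum_eq_single (⟨m, h⟩ : Fin n)]
      · simp
      · intro b _ hb
        rw [if_neg]
        intro hbm
        exact hb (by exact Fin.ext hbm)
      · intro hb; exact absurd (Finset.mem_univ _) hb
  · next h =>
      apply Finset.sum_eq_zero
      intro b _
      rw [if_neg]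
      intro hbm
      exact h (hbm ▸ b.isLt)

lemma path_nbr_sum {n : ℕ} (c : Fin n) (g : Fin n → ℝ) :
    (∑ b : Fin n, if (SimpleGraph.pathGraph n).Adj c b then g b else 0)
      = (if h : (c : ℕ) + 1 < n then g ⟨(c : ℕ) + 1, h⟩ else 0)
        + (if h : 0 < (c : ℕ) then g ⟨(c : ℕ) - 1, by omega⟩ else 0) := by
  have key : ∀ b : Fin n, (if (SimpleGraph.pathGraph n).Adj c b then g b else 0)
      = (if (b : ℕ) = (c : ℕ) + 1 then g b else 0)
        + (if 0 < (c : ℕ) ∧ (b : ℕ) = (c : ℕ) - 1 then g b else 0) := by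
    intro b
    rw [SimpleGraph.pathGraph_adj]
    by_cases h1 : (b : ℕ) = (c : ℕ) + 1
    · rw [if_pos (by omega), if_pos h1, if_neg (by omega)]; ring
    · by_cases h2 : 0 < (c : ℕ) ∧ (b : ℕ) = (c : ℕ) - 1
      · rw [if_pos (by omega), if_neg h1, if_pos h2]; ring
      · rw [if_neg (by omega), if_neg h1, if_neg h2]; ring
  rw [Finset.sum_congr rfl (fun b _ => key b), Finset.sum_add_distrib]
  congr 1
  · exact fin_sum_eq _ g
  · by_cases hc : 0 < (c : ℕ)
    · rw [dif_pos hc]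
      simp only [hc, true_and]
      rw [fin_sum_eq ((c : ℕ) - 1) g, dif_pos (by omega)]
    · rw [dif_neg hc]
      apply Finset.sum_eq_zero
      intro b _
      rw [if_neg (by omega)]

/-- Pointwise formula for the Laplacian of the ladder graph applied to a vector. -/
lemma ladder_mulVec (n : ℕ) (f : Fin 2 × Fin n → ℝ) (j : Fin 2) (c : Fin n) :
    ((ladder n).lapMatrix ℝ *ᵥ f) (j, c)
      = (f (j, c) - f (j + 1, c))
        + ((if h : (c : ℕ) + 1 < n then f (j, c) - f (j, ⟨(c : ℕ) + 1, h⟩) else 0)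
          + (if h : 0 < (c : ℕ) then f (j, c) - f (j, ⟨(c : ℕ) - 1, by omega⟩) else 0)) := by
  rw [lap_mulVec_sum]
  rw [show (Finset.univ : Finset (Fin 2 × Fin n)) = Finset.univ ×ˢ Finset.univ from rfl]
  rw [Finset.sum_product]
  have hsplit : ∀ h : Fin 2 → ℝ, ∑ a : Fin 2, h a = h j + h (j + 1) := by
    intro h
    rw [Fin.sum_univ_two]
    fin_cases j
    · have : ((⟨0, by omega⟩ : Fin 2) + 1) = 1 := by decide
      rw [this]
      rfl
    · have : ((⟨1, by omega⟩ : Fin 2) + 1) = 0 := by decide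
      rw [this]
      have h0 : ((⟨1, by omega⟩ : Fin 2)) = 1 := by decide
      rw [h0]
      ring
  rw [hsplit]
  have hj1 : j + 1 ≠ j := by fin_cases j <;> decide
  have hadj2 : (SimpleGraph.pathGraph 2).Adj j (j + 1) := by
    fin_cases j <;> (rw [SimpleGraph.pathGraph_adj]; decide)
  have hx : ∀ b : Fin n, (ladder n).Adj (j, c) (j, b) ↔ (SimpleGraph.pathGraph n).Adj c b := by
    intro b
    rw [ladder, SimpleGraph.boxProd_adj]
    constructor
    · rintro (⟨h, _⟩ | ⟨h, _⟩)
      · exact absurd h (SimpleGraph.irrefl _)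
      · exact h
    · intro h; exact Or.inr ⟨h, rfl⟩
  have hy : ∀ b : Fin n, (ladder n).Adj (j, c) (j + 1, b) ↔ b = c := by
    intro b
    rw [ladder, SimpleGraph.boxProd_adj]
    constructor
    · rintro (⟨_, h⟩ | ⟨_, h⟩)
      · exact h.symm
      · exact absurd h.symm hj1
    · rintro rfl; exact Or.inl ⟨hadj2, rfl⟩
  have e1 : (∑ b : Fin n, if (ladder n).Adj (j, c) (j, b) then f (j, c) - f (j, b) else 0)
      = (if h : (c : ℕ) + 1 < n then f (j, c) - f (j, ⟨(c : ℕ) + 1, h⟩) else 0)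
        + (if h : 0 < (c : ℕ) then f (j, c) - f (j, ⟨(c : ℕ) - 1, by omega⟩) else 0) := by
    rw [Finset.sum_congr rfl (fun b _ => by rw [hx b])]
    exact path_nbr_sum c (fun b => f (j, c) - f (j, b))
  have e2 : (∑ b : Fin n, if (ladder n).Adj (j, c) (j + 1, b) then f (j, c) - f (j + 1, b) else 0)
      = f (j, c) - f (j + 1, c) := by
    rw [Finset.sum_congr rfl (fun b _ => by rw [hy b])]
    rw [Finset.sum_eq_single c]
    · rw [if_pos rfl]
    · intro b _ hb; exact if_neg hb
    · intro hc; exact absurd (Finset.mem_univ c) hc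
  rw [e1, e2]
  ring

end GraphSums
section AlphaEq

/-- The explicit potential on the ladder realizing a unit current across the first rung. -/
noncomputable def frung (m : ℕ) : Fin 2 × Fin m → ℝ :=
  fun p => (if p.1 = 0 then (1:ℝ) else -1) * (w ((m:ℤ) - 1 - (p.2:ℕ)) / Qq ((m:ℤ) - 1))

lemma eps_succ (j : Fin 2) : (if j + 1 = 0 then (1:ℝ) else -1) = -(if j = 0 then 1 else -1) := by
  fin_cases j <;> simp

lemma Qq_cast_ne (m : ℕ) (hm : 0 < m) : Qq ((m:ℤ) - 1) ≠ 0 := by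
  have h : ((m - 1 : ℕ) : ℤ) = (m:ℤ) - 1 := by omega
  rw [← h]
  exact Qq_ne (m - 1)

lemma Qq_cast_pos (m : ℕ) (hm : 0 < m) : 0 < Qq ((m:ℤ) - 1) := by
  have h : ((m - 1 : ℕ) : ℤ) = (m:ℤ) - 1 := by omega
  rw [← h]
  exact Qq_pos (m - 1)

lemma alpha_eq (m : ℕ) (hm : 0 < m) :
    alpha m = 2 * w ((m:ℤ) - 1) / Qq ((m:ℤ) - 1) := by
  have hQne : Qq ((m:ℤ) - 1) ≠ 0 := Qq_cast_ne m hm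
  have hf : (ladder m).lapMatrix ℝ *ᵥ frung m
      = fun z => (if z = ((0 : Fin 2), (⟨0, hm⟩ : Fin m)) then (1:ℝ) else 0)
          - (if z = ((1 : Fin 2), (⟨0, hm⟩ : Fin m)) then 1 else 0) := by
    funext z
    obtain ⟨j, c⟩ := z
    have hx0 : ((j, c) = ((0 : Fin 2), (⟨0, hm⟩ : Fin m))) ↔ (j = 0 ∧ (c:ℕ) = 0) := by
      constructor
      · intro h
        injection h with h1 h2
        exact ⟨h1, by rw [h2]⟩
      · rintro ⟨rfl, h2⟩
        have : c = ⟨0, hm⟩ := Fin.ext h2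
        rw [this]
    have hx1 : ((j, c) = ((1 : Fin 2), (⟨0, hm⟩ : Fin m))) ↔ (j = 1 ∧ (c:ℕ) = 0) := by
      constructor
      · intro h
        injection h with h1 h2
        exact ⟨h1, by rw [h2]⟩
      · rintro ⟨rfl, h2⟩
        have : c = ⟨0, hm⟩ := Fin.ext h2
        rw [this]
    rw [ladder_mulVec]
    simp only [frung, eps_succ, hx0, hx1]
    set ε : ℝ := if j = 0 then (1:ℝ) else -1 with hε
    set D : ℤ := (m:ℤ) - 1 with hD
    have hQinv : Qq D * (Qq D)⁻¹ = 1 := mul_inv_cancel₀ hQne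
    have hQdef : Qq D = 3 * w D - w (D - 1) := rfl
    have hj01 : j = 0 ∨ j = 1 := by omega
    by_cases h1 : (c:ℕ) + 1 < m
    · rw [dif_pos h1]
      by_cases h2 : 0 < (c:ℕ)
      · rw [dif_pos h2, if_neg (show ¬(j = 0 ∧ (c:ℕ) = 0) from by rintro ⟨-, hc⟩; omega),
          if_neg (show ¬(j = 1 ∧ (c:ℕ) = 0) from by rintro ⟨-, hc⟩; omega)]
        have a1 : D - ((⟨(c:ℕ) + 1, h1⟩ : Fin m) : ℕ) = (D - (c:ℕ)) - 1 := by
          simp only [hD]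
          omega
        have a2 : D - ((⟨(c:ℕ) - 1, by omega⟩ : Fin m) : ℕ) = (D - (c:ℕ)) + 1 := by
          simp only [hD]
          omega
        rw [a1, a2]
        set d : ℤ := D - (c:ℕ) with hd
        linear_combination (-(ε) * (Qq D)⁻¹) * w_rec d
      · rw [dif_neg h2]
        have hc0 : (c:ℕ) = 0 := by omega
        have a1 : D - ((⟨(c:ℕ) + 1, h1⟩ : Fin m) : ℕ) = D - 1 := by
          simp only [hD]
          omega
        have a0 : D - ((c:ℕ):ℤ) = D := by omega
        rw [a1, a0]
        rcases hj01 with hj | hj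
        · rw [if_pos (show j = 0 ∧ (c:ℕ) = 0 from ⟨hj, hc0⟩),
            if_neg (show ¬(j = 1 ∧ (c:ℕ) = 0) from by
              rintro ⟨h, -⟩; rw [hj] at h; exact absurd h (by decide))]
          rw [hε, if_pos hj]
          linear_combination (-(Qq D)⁻¹) * hQdef + hQinv
        · rw [if_neg (show ¬(j = 0 ∧ (c:ℕ) = 0) from by
              rintro ⟨h, -⟩; rw [hj] at h; exact absurd h (by decide)),
            if_pos (show j = 1 ∧ (c:ℕ) = 0 from ⟨hj, hc0⟩)]
          rw [hε, if_neg (by rw [hj]; decide)]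
          linear_combination ((Qq D)⁻¹) * hQdef - hQinv
    · rw [dif_neg h1]
      have hcm : (c:ℕ) = m - 1 := by have := c.isLt; omega
      by_cases h2 : 0 < (c:ℕ)
      · rw [dif_pos h2, if_neg (show ¬(j = 0 ∧ (c:ℕ) = 0) from by rintro ⟨-, hc⟩; omega),
          if_neg (show ¬(j = 1 ∧ (c:ℕ) = 0) from by rintro ⟨-, hc⟩; omega)]
        have a0 : D - ((c:ℕ):ℤ) = 0 := by simp only [hD]; omega
        have a2 : D - ((⟨(c:ℕ) - 1, by omega⟩ : Fin m) : ℕ) = 1 := by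
          simp only [hD]
          omega
        rw [a0, a2]
        linear_combination (ε * (Qq D)⁻¹) * three_w0
      · rw [dif_neg h2]
        have hm1 : m = 1 := by omega
        have hc0 : (c:ℕ) = 0 := by omega
        have a0 : D - ((c:ℕ):ℤ) = 0 := by simp only [hD]; omega
        rw [a0]
        have hQ0 : Qq D = 2 * w 0 := by rw [show D = 0 from by simp only [hD]; omega, Qq_zero]
        have hQinv0 : Qq D * (Qq D)⁻¹ = 1 := hQinv
        rcases hj01 with hj | hj
        · rw [if_pos (show j = 0 ∧ (c:ℕ) = 0 from ⟨hj, hc0⟩),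
            if_neg (show ¬(j = 1 ∧ (c:ℕ) = 0) from by
              rintro ⟨h, -⟩; rw [hj] at h; exact absurd h (by decide))]
          rw [hε, if_pos hj]
          linear_combination hQinv0 - ((Qq D)⁻¹) * hQ0
        · rw [if_neg (show ¬(j = 0 ∧ (c:ℕ) = 0) from by
              rintro ⟨h, -⟩; rw [hj] at h; exact absurd h (by decide)),
            if_pos (show j = 1 ∧ (c:ℕ) = 0 from ⟨hj, hc0⟩)]
          rw [hε, if_neg (by rw [hj]; decide)]
          linear_combination ((Qq D)⁻¹) * hQ0 - hQinv0
  have heff := effRes_eq_of_mulVec (ladder m) _ _ (frung m) hf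
  rw [alpha, dif_pos hm, heff]
  simp only [frung]
  norm_num [show ¬((1:Fin 2) = 0) from by decide]
  ring
lemma epsflip (i j : Fin 2) :
    (if j + 1 = i then (1:ℝ) else -1) = -(if j = i then 1 else -1) := by
  fin_cases i <;> fin_cases j <;> simp

theorem mid_rail_effres (n k : ℕ) (hk1 : 1 < k) (hkn : k < n) (i : Fin 2) :
    effRes (ladder n) (i, ⟨k - 1, by omega⟩) (i, ⟨k, by omega⟩)
      = 1 / (1 + 1 / (alpha k + alpha (n - k) + 1)) := by
  have hk0 : 0 < k := by omega
  have hnk0 : 0 < n - k := by omega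
  set Dl : ℤ := (k:ℤ) - 1 with hDl
  set Dr : ℤ := ((n - k : ℕ) : ℤ) - 1 with hDr
  have hQlne : Qq Dl ≠ 0 := Qq_cast_ne k hk0
  have hQrne : Qq Dr ≠ 0 := Qq_cast_ne (n - k) hnk0
  have hQlpos : 0 < Qq Dl := Qq_cast_pos k hk0
  have hQrpos : 0 < Qq Dr := Qq_cast_pos (n - k) hnk0
  have hQlinv : Qq Dl * (Qq Dl)⁻¹ = 1 := mul_inv_cancel₀ hQlne
  have hQrinv : Qq Dr * (Qq Dr)⁻¹ = 1 := mul_inv_cancel₀ hQrne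
  have hQl : Qq Dl = 3 * w Dl - w (Dl - 1) := rfl
  have hQr : Qq Dr = 3 * w Dr - w (Dr - 1) := rfl
  set S : ℝ := 2 * w Dl / Qq Dl + 2 * w Dr / Qq Dr + 1 with hS
  have hSpos : 0 < S := by
    rw [hS]
    have h1 : 0 < 2 * w Dl / Qq Dl := div_pos (by linarith [w_pos Dl]) hQlpos
    have h2 : 0 < 2 * w Dr / Qq Dr := div_pos (by linarith [w_pos Dr]) hQrpos
    linarith
  have hS1ne : S + 1 ≠ 0 := by linarith
  set β : ℝ := 1 / (S + 1) with hβdef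
  have hβ : β * (S + 1) = 1 := by rw [hβdef]; field_simp
  set A : ℝ := β * S - β * (w Dl / Qq Dl) with hA
  set B : ℝ := β * (w Dr / Qq Dr) with hB
  set F : Fin 2 × Fin n → ℝ := fun p =>
    if (p.2 : ℕ) < k then
      β * (if p.1 = i then (1:ℝ) else -1) * (w ((p.2 : ℕ) : ℤ) / Qq Dl) + A
    else
      -(β * (if p.1 = i then (1:ℝ) else -1)) * (w ((n:ℤ) - 1 - ((p.2 : ℕ) : ℤ)) / Qq Dr) + B
    with hF
  have hf : (ladder n).lapMatrix ℝ *ᵥ F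
      = fun z => (if z = ((i : Fin 2), (⟨k - 1, by omega⟩ : Fin n)) then (1:ℝ) else 0)
          - (if z = ((i : Fin 2), (⟨k, by omega⟩ : Fin n)) then 1 else 0) := by
    funext z
    obtain ⟨j, c⟩ := z
    have hx0 : ((j, c) = ((i : Fin 2), (⟨k - 1, by omega⟩ : Fin n))) ↔ (j = i ∧ (c:ℕ) = k - 1) := by
      constructor
      · intro h
        injection h with h1 h2
        exact ⟨h1, by rw [h2]⟩
      · rintro ⟨rfl, h2⟩
        have : c = ⟨k - 1, by omega⟩ := Fin.ext h2
        rw [this]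
    have hx1 : ((j, c) = ((i : Fin 2), (⟨k, by omega⟩ : Fin n))) ↔ (j = i ∧ (c:ℕ) = k) := by
      constructor
      · intro h
        injection h with h1 h2
        exact ⟨h1, by rw [h2]⟩
      · rintro ⟨rfl, h2⟩
        have : c = ⟨k, by omega⟩ := Fin.ext h2
        rw [this]
    rw [ladder_mulVec]
    by_cases hcL : (c:ℕ) + 1 < k
    · -- entirely inside the left block
      rw [dif_pos (show (c:ℕ) + 1 < n by omega)]
      by_cases h2 : 0 < (c:ℕ)
      · rw [dif_pos h2]
        simp only [hF, epsflip, hx0, hx1,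
          if_pos (show (c:ℕ) < k from by omega),
          if_pos (show (c:ℕ) + 1 < k from hcL),
          if_pos (show (c:ℕ) - 1 < k from by omega),
          if_neg (show ¬(j = i ∧ (c:ℕ) = k - 1) from by rintro ⟨-, hc⟩; omega),
          if_neg (show ¬(j = i ∧ (c:ℕ) = k) from by rintro ⟨-, hc⟩; omega)]
        rw [show w (((c:ℕ) + 1 : ℕ) : ℤ) = w (((c:ℕ):ℤ) + 1) from rfl,
          show w (((c:ℕ) - 1 : ℕ) : ℤ) = w (((c:ℕ):ℤ) - 1) from by congr 1; omega]
        linear_combination (-(β * (if j = i then (1:ℝ) else -1) * (Qq Dl)⁻¹)) * w_rec ((c:ℕ):ℤ)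
      · rw [dif_neg h2]
        simp only [hF, epsflip, hx0, hx1,
          if_pos (show (c:ℕ) < k from by omega),
          if_pos (show (c:ℕ) + 1 < k from hcL),
          if_neg (show ¬(j = i ∧ (c:ℕ) = k - 1) from by rintro ⟨-, hc⟩; omega),
          if_neg (show ¬(j = i ∧ (c:ℕ) = k) from by rintro ⟨-, hc⟩; omega)]
        rw [show w (((c:ℕ) + 1 : ℕ) : ℤ) = w 1 from by congr 1; omega,
          show w (((c:ℕ) : ℕ) : ℤ) = w 0 from by congr 1; omega]
        linear_combination (β * (if j = i then (1:ℝ) else -1) * (Qq Dl)⁻¹) * three_w0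
    · by_cases hcK1 : (c:ℕ) < k
      · -- the column k-1 : the source x
        have hkk : (c:ℕ) = k - 1 := by omega
        rw [dif_pos (show (c:ℕ) + 1 < n by omega), dif_pos (show 0 < (c:ℕ) by omega)]
        simp only [hF, epsflip, hx0, hx1,
          if_pos (show (c:ℕ) < k from hcK1),
          if_neg (show ¬((c:ℕ) + 1 < k) from by omega),
          if_pos (show (c:ℕ) - 1 < k from by omega)]
        rw [show w (((c:ℕ) : ℕ) : ℤ) = w Dl from by congr 1; simp only [hDl]; omega,
          show w (((c:ℕ) - 1 : ℕ) : ℤ) = w (Dl - 1) from by congr 1; simp only [hDl]; omega,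
          show w ((n:ℤ) - 1 - (((c:ℕ) + 1 : ℕ) : ℤ)) = w Dr from by congr 1; simp only [hDr]; omega]
        rcases eq_or_ne j i with hj | hj
        · simp only [hj, eq_self_iff_true, if_true, true_and,
            if_pos (show (c:ℕ) = k - 1 from hkk),
            if_neg (show ¬((c:ℕ) = k) from by omega)]
          rw [hA, hB]
          linear_combination (-(β * (Qq Dl)⁻¹)) * hQl + β * hQlinv + hβ
        · simp only [if_neg hj,
            if_neg (show ¬(j = i ∧ (c:ℕ) = k - 1) from by rintro ⟨h, -⟩; exact hj h),
            if_neg (show ¬(j = i ∧ (c:ℕ) = k) from by rintro ⟨h, -⟩; exact hj h)]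
          rw [hA, hB]
          linear_combination (β * (Qq Dl)⁻¹) * hQl + (-β) * hQlinv + β * hS
      · by_cases hcK : (c:ℕ) = k
        · -- the column k : the sink y
          rw [dif_pos (show 0 < (c:ℕ) by omega)]
          by_cases h1 : (c:ℕ) + 1 < n
          · rw [dif_pos h1]
            simp only [hF, epsflip, hx0, hx1,
              if_neg (show ¬((c:ℕ) < k) from by omega),
              if_neg (show ¬((c:ℕ) + 1 < k) from by omega),
              if_pos (show (c:ℕ) - 1 < k from by omega)]
            rw [show w ((n:ℤ) - 1 - (((c:ℕ) : ℕ) : ℤ)) = w Dr from by congr 1; simp only [hDr]; omega,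
              show w (((c:ℕ) - 1 : ℕ) : ℤ) = w Dl from by congr 1; simp only [hDl]; omega,
              show w ((n:ℤ) - 1 - (((c:ℕ) + 1 : ℕ) : ℤ)) = w (Dr - 1) from by congr 1; simp only [hDr]; omega]
            rcases eq_or_ne j i with hj | hj
            · simp only [hj, eq_self_iff_true, if_true, true_and,
                if_neg (show ¬((c:ℕ) = k - 1) from by omega),
                if_pos (show (c:ℕ) = k from hcK)]
              rw [hA, hB]
              linear_combination (β * (Qq Dr)⁻¹) * hQr + (-β) * hQrinv + (-1 : ℝ) * hβ
            · simp only [if_neg hj,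
                if_neg (show ¬(j = i ∧ (c:ℕ) = k - 1) from by rintro ⟨h, -⟩; exact hj h),
                if_neg (show ¬(j = i ∧ (c:ℕ) = k) from by rintro ⟨h, -⟩; exact hj h)]
              rw [hA, hB]
              linear_combination (-(β * (Qq Dr)⁻¹)) * hQr + β * hQrinv + (-β) * hS
          · -- k = n - 1, so the right block is a single column
            rw [dif_neg h1]
            have hDr0 : Dr = 0 := by simp only [hDr]; omega
            have hQr0 : Qq Dr = 2 * w Dr := by rw [hDr0, Qq_zero]
            simp only [hF, epsflip, hx0, hx1,
              if_neg (show ¬((c:ℕ) < k) from by omega),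
              if_pos (show (c:ℕ) - 1 < k from by omega)]
            rw [show w ((n:ℤ) - 1 - (((c:ℕ) : ℕ) : ℤ)) = w Dr from by congr 1; simp only [hDr]; omega,
              show w (((c:ℕ) - 1 : ℕ) : ℤ) = w Dl from by congr 1; simp only [hDl]; omega]
            rcases eq_or_ne j i with hj | hj
            · simp only [hj, eq_self_iff_true, if_true, true_and,
                if_neg (show ¬((c:ℕ) = k - 1) from by omega),
                if_pos (show (c:ℕ) = k from hcK)]
              rw [hA, hB]
              linear_combination (β * (Qq Dr)⁻¹) * hQr0 + (-β) * hQrinv + (-1 : ℝ) * hβ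
            · simp only [if_neg hj,
                if_neg (show ¬(j = i ∧ (c:ℕ) = k - 1) from by rintro ⟨h, -⟩; exact hj h),
                if_neg (show ¬(j = i ∧ (c:ℕ) = k) from by rintro ⟨h, -⟩; exact hj h)]
              rw [hA, hB]
              linear_combination (-β) * hS + (-(β * (Qq Dr)⁻¹)) * hQr0 + β * hQrinv
        · -- strictly inside the right block
          have hck : k < (c:ℕ) := by omega
          rw [dif_pos (show 0 < (c:ℕ) by omega)]
          by_cases h1 : (c:ℕ) + 1 < n
          · rw [dif_pos h1]
            simp only [hF, epsflip, hx0, hx1,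
              if_neg (show ¬((c:ℕ) < k) from by omega),
              if_neg (show ¬((c:ℕ) + 1 < k) from by omega),
              if_neg (show ¬((c:ℕ) - 1 < k) from by omega),
              if_neg (show ¬(j = i ∧ (c:ℕ) = k - 1) from by rintro ⟨-, hc⟩; omega),
              if_neg (show ¬(j = i ∧ (c:ℕ) = k) from by rintro ⟨-, hc⟩; omega)]
            rw [show w ((n:ℤ) - 1 - (((c:ℕ) + 1 : ℕ) : ℤ)) = w (((n:ℤ) - 1 - ((c:ℕ):ℤ)) - 1) from by congr 1; omega,
              show w ((n:ℤ) - 1 - (((c:ℕ) - 1 : ℕ) : ℤ)) = w (((n:ℤ) - 1 - ((c:ℕ):ℤ)) + 1) from by congr 1; omega]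
            linear_combination (β * (if j = i then (1:ℝ) else -1) * (Qq Dr)⁻¹)
              * w_rec ((n:ℤ) - 1 - ((c:ℕ):ℤ))
          · rw [dif_neg h1]
            simp only [hF, epsflip, hx0, hx1,
              if_neg (show ¬((c:ℕ) < k) from by omega),
              if_neg (show ¬((c:ℕ) - 1 < k) from by omega),
              if_neg (show ¬(j = i ∧ (c:ℕ) = k - 1) from by rintro ⟨-, hc⟩; omega),
              if_neg (show ¬(j = i ∧ (c:ℕ) = k) from by rintro ⟨-, hc⟩; omega)]
            rw [show w ((n:ℤ) - 1 - (((c:ℕ) : ℕ) : ℤ)) = w 0 from by congr 1; omega,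
              show w ((n:ℤ) - 1 - (((c:ℕ) - 1 : ℕ) : ℤ)) = w 1 from by congr 1; omega]
            linear_combination (-(β * (if j = i then (1:ℝ) else -1) * (Qq Dr)⁻¹)) * three_w0
  have heff := effRes_eq_of_mulVec (ladder n) _ _ F hf
  rw [heff, alpha_eq k hk0, alpha_eq (n - k) hnk0]
  simp only [hF, eq_self_iff_true, if_true,
    if_pos (show k - 1 < k from by omega),
    if_neg (show ¬(k < k) from by omega)]
  rw [show w (((k - 1 : ℕ)) : ℤ) = w Dl from by
      congr 1; simp only [hDl]; omega,
    show w ((n:ℤ) - 1 - ((k : ℕ) : ℤ)) = w Dr from by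
      congr 1; simp only [hDr]; omega]
  rw [hA, hB]
  rw [show (2 * w ((k:ℤ) - 1) / Qq ((k:ℤ) - 1)
      + 2 * w (((n - k : ℕ):ℤ) - 1) / Qq (((n - k : ℕ):ℤ) - 1) + 1 : ℝ) = S from hS.symm]
  have hβS : β * S = 1 / (1 + 1 / S) := by
    rw [hβdef]
    field_simp
  linear_combination hβS
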